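/- Let N ≥ 2, q a primitive N-th root of unity, and T_N the Taft algebra. For any s ∈ ℂ, the algebra A_s generated by X, G with relations X^N = s, G^N = 1, XG = q GX is a right T_N-comodule algebra under δ(X) = 1⊗x + X⊗g, δ(G) = G⊗g, and its subalgebra of coinvariants is exactly ℂ·1; hence A_s is a T_N-Galois object. -/

import Mathlib

open TensorProduct

noncomputable section

variable {T A : Type*} [Ring T] [HopfAlgebra ℂ T] [Ring A] [Algebra ℂ A]

/-- The canonical Galois map `A ⊗ A → A ⊗ T`, `a' ⊗ a ↦ a' a₍₀₎ ⊗ a₍₁₎`.  Since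
the coinvariants are the scalars, the balanced tensor product is `A ⊗[ℂ] A`. -/
def canMapPt (δ : A →ₐ[ℂ] A ⊗[ℂ] T) : A ⊗[ℂ] A →ₗ[ℂ] A ⊗[ℂ] T :=
  (LinearMap.rTensor T (LinearMap.mul' ℂ A)) ∘ₗ
    ((TensorProduct.assoc ℂ A A T).symm.toLinearMap) ∘ₗ
      (LinearMap.lTensor A δ.toLinearMap)

namespace TaftAux14

def cc (q : ℂ) : ℕ → ℕ → ℂ
  | 0, 0 => 1
  | 0, _ + 1 => 0
  | i + 1, 0 => cc q i 0
  | i + 1, k + 1 => q⁻¹ ^ (k + 1) * cc q i (k + 1) + cc q i k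

lemma cc_zero_right (q : ℂ) : ∀ i, cc q i 0 = 1
  | 0 => rfl
  | i + 1 => by rw [cc]; exact cc_zero_right q i

lemma cc_eq_zero (q : ℂ) : ∀ i k, i < k → cc q i k = 0
  | 0, _ + 1, _ => rfl
  | i + 1, k + 1, h => by
      rw [cc, cc_eq_zero q i (k + 1) (by omega), cc_eq_zero q i k (by omega)]
      ring

lemma qcomm_pow {B : Type*} [Ring B] [Algebra ℂ B] {q : ℂ} (hq : q ≠ 0)
    {u v : B} (h : u * v = q • (v * u)) :
    ∀ k, v ^ k * u = (q⁻¹) ^ k • (u * v ^ k)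
  | 0 => by simp
  | k + 1 => by
      have hvu : v * u = q⁻¹ • (u * v) := by
        rw [h, smul_smul, inv_mul_cancel₀ hq, one_smul]
      calc v ^ (k + 1) * u = v ^ k * (v * u) := by rw [pow_succ, mul_assoc]
        _ = q⁻¹ • (v ^ k * (u * v)) := by rw [hvu, mul_smul_comm]
        _ = q⁻¹ • ((v ^ k * u) * v) := by rw [mul_assoc]
        _ = q⁻¹ • (((q⁻¹) ^ k • (u * v ^ k)) * v) := by rw [qcomm_pow hq h k]
        _ = (q⁻¹) ^ (k + 1) • (u * v ^ (k + 1)) := by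
            rw [smul_mul_assoc, smul_smul, mul_assoc, ← pow_succ, ← pow_succ']

lemma qbinom {B : Type*} [Ring B] [Algebra ℂ B] {q : ℂ} (hq : q ≠ 0)
    {u v : B} (h : u * v = q • (v * u)) :
    ∀ i, (u + v) ^ i = ∑ k ∈ Finset.range (i + 1), cc q i k • (u ^ (i - k) * v ^ k)
  | 0 => by simp [cc]
  | i + 1 => by
    rw [pow_succ, qbinom hq h i, Finset.sum_mul]
    have expand : ∀ k ∈ Finset.range (i + 1),
        (cc q i k • (u ^ (i - k) * v ^ k)) * (u + v)
          = ((q⁻¹ ^ k * cc q i k) • (u ^ (i + 1 - k) * v ^ k))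
            + cc q i k • (u ^ (i - k) * v ^ (k + 1)) := by
      intro k hk
      have hk' : k ≤ i := Nat.lt_succ_iff.mp (Finset.mem_range.mp hk)
      rw [mul_add, smul_mul_assoc, smul_mul_assoc]
      congr 1
      · have harith : i - k + 1 = i + 1 - k := by omega
        rw [mul_assoc, qcomm_pow hq h k, mul_smul_comm, smul_smul,
          mul_comm (cc q i k), ← mul_assoc, ← pow_succ, harith]
      · rw [mul_assoc, ← pow_succ]
    rw [Finset.sum_congr rfl expand, Finset.sum_add_distrib]
    -- transform the RHS
    rw [Finset.sum_range_succ' (fun k => cc q (i + 1) k • (u ^ (i + 1 - k) * v ^ k)) (i + 1)]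
    have hsplit : ∀ k ∈ Finset.range (i + 1),
        cc q (i + 1) (k + 1) • (u ^ (i + 1 - (k + 1)) * v ^ (k + 1))
          = (q⁻¹ ^ (k + 1) * cc q i (k + 1)) • (u ^ (i - k) * v ^ (k + 1))
            + cc q i k • (u ^ (i - k) * v ^ (k + 1)) := by
      intro k hk
      rw [cc, add_smul, Nat.succ_sub_succ]
    rw [Finset.sum_congr rfl hsplit, Finset.sum_add_distrib]
    -- now match the three pieces
    have h1 : ∑ k ∈ Finset.range (i + 1), (q⁻¹ ^ k * cc q i k) • (u ^ (i + 1 - k) * v ^ k)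
        = (∑ k ∈ Finset.range (i + 1), (q⁻¹ ^ (k + 1) * cc q i (k + 1)) • (u ^ (i - k) * v ^ (k + 1)))
          + cc q (i + 1) 0 • (u ^ (i + 1) * v ^ 0) := by
      rw [Finset.sum_range_succ' (fun k => (q⁻¹ ^ k * cc q i k) • (u ^ (i + 1 - k) * v ^ k)) i]
      rw [Finset.sum_range_succ (fun k => (q⁻¹ ^ (k + 1) * cc q i (k + 1)) • (u ^ (i - k) * v ^ (k + 1))) i]
      rw [cc_eq_zero q i (i + 1) (by omega)]
      simp only [Nat.succ_sub_succ, mul_zero, zero_smul, add_zero, pow_zero, one_mul,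
        cc_zero_right, Nat.sub_zero]
    rw [h1]
    simp only [Nat.sub_zero]
    abel

lemma algHom_eq_on_gen {A C : Type*} [Ring A] [Algebra ℂ A] [Ring C] [Algebra ℂ C]
    {X G : A} (htop : ∀ a : A, a ∈ Algebra.adjoin ℂ ({X, G} : Set A))
    (f₁ f₂ : A →ₐ[ℂ] C) (hX : f₁ X = f₂ X) (hG : f₁ G = f₂ G) (a : A) :
    f₁ a = f₂ a := by
  refine Algebra.adjoin_induction (p := fun y _ => f₁ y = f₂ y) ?_ ?_ ?_ ?_ (htop a)
  · rintro y (rfl | rfl)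
    · exact hX
    · exact hG
  · intro r; simp
  · intro u v _ _ h1 h2; simp [h1, h2]
  · intro u v _ _ h1 h2; simp [h1, h2]

end TaftAux14

set_option maxHeartbeats 1000000 in
set_option synthInstance.maxHeartbeats 100000 in
/-- for the Taft algebra `T_N` (generators `x, g`, `x^N = 0`,
`g^N = 1`, `xg = q gx`, `q` a primitive `N`-th root of unity) and any `s ∈ ℂ`,
the algebra `A_s` (generators `X, G`, `X^N = s`, `G^N = 1`, `XG = q GX`) is a
right `T_N`-comodule algebra via `δ(X) = 1 ⊗ x + X ⊗ g`, `δ(G) = G ⊗ g`, its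
coinvariants are exactly `ℂ·1`, and `A_s` is a `T_N`-Galois object (the
canonical map is bijective). -/
theorem taft_A_s_galois_object
    (N : ℕ) (hN : 2 ≤ N) (q : ℂ) (hq : IsPrimitiveRoot q N)
    (x g : T) (hxN : x ^ N = 0) (hgN : g ^ N = 1)
    (hxg : x * g = q • (g * x))
    (hcomulx : Coalgebra.comul (R := ℂ) x = 1 ⊗ₜ[ℂ] x + x ⊗ₜ[ℂ] g)
    (hcomulg : Coalgebra.comul (R := ℂ) g = g ⊗ₜ[ℂ] g)
    (hcounitx : Coalgebra.counit (R := ℂ) x = 0)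
    (hcounitg : Coalgebra.counit (R := ℂ) g = 1)
    (BT : Module.Basis (Fin N × Fin N) ℂ T)
    (hBT : ∀ p : Fin N × Fin N, BT p = x ^ (p.1 : ℕ) * g ^ (p.2 : ℕ))
    (s : ℂ) (X G : A)
    (hXN : X ^ N = s • (1 : A)) (hGN : G ^ N = 1)
    (hXG : X * G = q • (G * X))
    (BA : Module.Basis (Fin N × Fin N) ℂ A)
    (hBA : ∀ p : Fin N × Fin N, BA p = X ^ (p.1 : ℕ) * G ^ (p.2 : ℕ))
    (δ : A →ₐ[ℂ] A ⊗[ℂ] T)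
    (hδX : δ X = 1 ⊗ₜ[ℂ] x + X ⊗ₜ[ℂ] g)
    (hδG : δ G = G ⊗ₜ[ℂ] g) :
    (∀ a : A,
      (TensorProduct.rid ℂ A)
        ((LinearMap.lTensor A (Coalgebra.counit (R := ℂ) (A := T))) (δ a)) = a) ∧
    (∀ a : A,
      (TensorProduct.assoc ℂ A T T)
        ((LinearMap.rTensor T δ.toLinearMap) (δ a)) =
      (LinearMap.lTensor A (Coalgebra.comul (R := ℂ) (A := T))) (δ a)) ∧
    ({a : A | δ a = a ⊗ₜ[ℂ] 1} = Set.range (algebraMap ℂ A)) ∧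
    Function.Bijective (canMapPt δ) := by
  classical
  have hq0 : q ≠ 0 := hq.ne_zero (by omega)
  -- A is generated by X and G
  have htop : ∀ a : A, a ∈ Algebra.adjoin ℂ ({X, G} : Set A) := by
    intro a
    have h1 : a ∈ Submodule.span ℂ (Set.range BA) := by rw [BA.span_eq]; trivial
    have h2 : Submodule.span ℂ (Set.range BA)
        ≤ Subalgebra.toSubmodule (Algebra.adjoin ℂ ({X, G} : Set A)) := by
      rw [Submodule.span_le]
      rintro _ ⟨p, rfl⟩
      show BA p ∈ Algebra.adjoin ℂ ({X, G} : Set A)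
      rw [hBA]
      exact mul_mem (pow_mem (Algebra.subset_adjoin (by simp)) _)
        (pow_mem (Algebra.subset_adjoin (by simp)) _)
    exact h2 h1
  -- Part 1 : counit law
  have part1 : ∀ a : A,
      (TensorProduct.rid ℂ A)
        ((LinearMap.lTensor A (Coalgebra.counit (R := ℂ) (A := T))) (δ a)) = a := by
    set f₁ : A →ₐ[ℂ] A :=
      ((Algebra.TensorProduct.rid ℂ ℂ A).toAlgHom.comp
        (Algebra.TensorProduct.map (AlgHom.id ℂ A) (Bialgebra.counitAlgHom ℂ T))).comp δ with hf₁
    have hfX : f₁ X = (AlgHom.id ℂ A) X := by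
      simp [hf₁, hδX, hcounitx, hcounitg, Algebra.TensorProduct.rid_tmul]
    have hfG : f₁ G = (AlgHom.id ℂ A) G := by
      simp [hf₁, hδG, hcounitg, Algebra.TensorProduct.rid_tmul]
    intro a
    have key := TaftAux14.algHom_eq_on_gen htop f₁ (AlgHom.id ℂ A) hfX hfG a
    have hw : ∀ w : A ⊗[ℂ] T,
        (TensorProduct.rid ℂ A) ((LinearMap.lTensor A (Coalgebra.counit (R := ℂ) (A := T))) w)
          = (Algebra.TensorProduct.rid ℂ ℂ A)
              ((Algebra.TensorProduct.map (AlgHom.id ℂ A) (Bialgebra.counitAlgHom ℂ T)) w) := by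
      intro w
      induction w using TensorProduct.induction_on with
      | zero => simp
      | tmul a t => simp [Algebra.TensorProduct.rid_tmul]
      | add u v hu hv => simp [hu, hv]
    rw [hw (δ a)]
    simpa [hf₁] using key
  have part2 : ∀ a : A,
      (TensorProduct.assoc ℂ A T T)
        ((LinearMap.rTensor T δ.toLinearMap) (δ a)) =
      (LinearMap.lTensor A (Coalgebra.comul (R := ℂ) (A := T))) (δ a) := by
    set f₁ : A →ₐ[ℂ] A ⊗[ℂ] (T ⊗[ℂ] T) :=
      ((Algebra.TensorProduct.assoc ℂ ℂ ℂ A T T).toAlgHom.comp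
        (Algebra.TensorProduct.map δ (AlgHom.id ℂ T))).comp δ with hf₁
    set f₂ : A →ₐ[ℂ] A ⊗[ℂ] (T ⊗[ℂ] T) :=
      (Algebra.TensorProduct.map (AlgHom.id ℂ A) (Bialgebra.comulAlgHom ℂ T)).comp δ with hf₂
    have hfX : f₁ X = f₂ X := by
      simp only [hf₁, hf₂, AlgHom.coe_comp, AlgEquiv.toAlgHom_eq_coe, AlgHom.coe_coe,
        Function.comp_apply, hδX, map_add, Algebra.TensorProduct.map_tmul, AlgHom.coe_id,
        id_eq, Bialgebra.comulAlgHom_apply, hcomulx, hcomulg, map_one,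
        Algebra.TensorProduct.assoc_tmul, tmul_add]
      rw [Algebra.TensorProduct.one_def]
      simp only [AlgEquiv.coe_algHom, AlgHom.coe_coe, add_tmul, map_add,
        Algebra.TensorProduct.assoc_tmul]
      abel
    have hfG : f₁ G = f₂ G := by
      simp [hf₁, hf₂, hδG, hcomulg]
    intro a
    have key := TaftAux14.algHom_eq_on_gen htop f₁ f₂ hfX hfG a
    have hmap1 : ∀ w : A ⊗[ℂ] T, (LinearMap.rTensor T δ.toLinearMap) w
        = (Algebra.TensorProduct.map δ (AlgHom.id ℂ T)) w := by
      intro w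
      induction w using TensorProduct.induction_on with
      | zero => simp
      | tmul a t => simp
      | add u v hu hv => simp [hu, hv]
    have hmap2 : ∀ w : A ⊗[ℂ] T, (LinearMap.lTensor A (Coalgebra.comul (R := ℂ) (A := T))) w
        = (Algebra.TensorProduct.map (AlgHom.id ℂ A) (Bialgebra.comulAlgHom ℂ T)) w := by
      intro w
      induction w using TensorProduct.induction_on with
      | zero => simp
      | tmul a t => simp
      | add u v hu hv => simp [hu, hv]
    have hassoc : ∀ z : (A ⊗[ℂ] T) ⊗[ℂ] T, (TensorProduct.assoc ℂ A T T) z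
        = (Algebra.TensorProduct.assoc ℂ ℂ ℂ A T T) z := fun z => rfl
    rw [hmap1, hmap2, hassoc]
    simpa [hf₁, hf₂] using key
  -- expansion of δ on monomials
  have huv : (1 ⊗ₜ[ℂ] x : A ⊗[ℂ] T) * (X ⊗ₜ[ℂ] g) = q • ((X ⊗ₜ[ℂ] g) * (1 ⊗ₜ[ℂ] x)) := by
    simp only [Algebra.TensorProduct.tmul_mul_tmul, one_mul, mul_one]
    rw [hxg, tmul_smul]
  have hδXi : ∀ i : ℕ, (δ X) ^ i = ∑ k ∈ Finset.range (i + 1),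
      TaftAux14.cc q i k • ((X ^ k) ⊗ₜ[ℂ] (x ^ (i - k) * g ^ k)) := by
    intro i
    rw [hδX, TaftAux14.qbinom hq0 huv i]
    refine Finset.sum_congr rfl fun k _ => ?_
    rw [Algebra.TensorProduct.tmul_pow, Algebra.TensorProduct.tmul_pow,
      Algebra.TensorProduct.tmul_mul_tmul, one_pow, one_mul]
  have hδmono : ∀ i l : ℕ, δ (X ^ i * G ^ l) = ∑ k ∈ Finset.range (i + 1),
      TaftAux14.cc q i k • ((X ^ k * G ^ l) ⊗ₜ[ℂ] (x ^ (i - k) * g ^ (k + l))) := by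
    intro i l
    rw [map_mul, map_pow, map_pow, hδG, hδXi i, Algebra.TensorProduct.tmul_pow, Finset.sum_mul]
    refine Finset.sum_congr rfl fun k _ => ?_
    rw [smul_mul_assoc, Algebra.TensorProduct.tmul_mul_tmul, mul_assoc, ← pow_add]
  -- the canonical map on pure tensors
  have hcan0 : ∀ (b : A) (w : A ⊗[ℂ] T),
      (LinearMap.rTensor T (LinearMap.mul' ℂ A))
          ((TensorProduct.assoc ℂ A A T).symm.toLinearMap (b ⊗ₜ[ℂ] w))
        = LinearMap.rTensor T (LinearMap.mulLeft ℂ b) w := by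
    intro b w
    induction w using TensorProduct.induction_on with
    | zero => rw [tmul_zero, map_zero, map_zero, map_zero]
    | tmul u t =>
        rw [LinearEquiv.coe_coe, TensorProduct.assoc_symm_tmul, LinearMap.rTensor_tmul,
          LinearMap.rTensor_tmul, LinearMap.mul'_apply, LinearMap.mulLeft_apply]
    | add u v hu hv => rw [tmul_add, map_add, map_add, map_add, hu, hv]
  have hcan : ∀ b e : A, canMapPt δ (b ⊗ₜ[ℂ] e)
      = LinearMap.rTensor T (LinearMap.mulLeft ℂ b) (δ e) := by
    intro b e
    have hunfold : canMapPt δ (b ⊗ₜ[ℂ] e) = (LinearMap.rTensor T (LinearMap.mul' ℂ A))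
        ((TensorProduct.assoc ℂ A A T).symm.toLinearMap (b ⊗ₜ[ℂ] (δ e))) := by
      simp only [canMapPt, LinearMap.coe_comp, Function.comp_apply, LinearMap.lTensor_tmul,
        AlgHom.toLinearMap_apply]
    rw [hunfold, hcan0]
  -- every a ⊗ x^i g^l lies in the range of the canonical map
  have memR : ∀ i : ℕ, ∀ (a : A) (l : ℕ),
      a ⊗ₜ[ℂ] (x ^ i * g ^ l) ∈ LinearMap.range (canMapPt δ) := by
    intro i
    induction i using Nat.strong_induction_on with
    | _ i IH =>
      intro a l
      set b : A := a * G ^ ((N - 1) * l) with hb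
      have hNl : (N - 1) * l + l = N * l := by
        have hN1 : N - 1 + 1 = N := by omega
        calc (N - 1) * l + l = ((N - 1) + 1) * l := by ring
          _ = N * l := by rw [hN1]
      have hbG : b * G ^ l = a := by
        rw [hb, mul_assoc, ← pow_add, hNl, pow_mul, hGN, one_pow, mul_one]
      have hkey : canMapPt δ (b ⊗ₜ[ℂ] (X ^ i * G ^ l)) =
          (∑ k ∈ Finset.range i, TaftAux14.cc q i (k + 1) •
            ((b * (X ^ (k + 1) * G ^ l)) ⊗ₜ[ℂ] (x ^ (i - (k + 1)) * g ^ (k + 1 + l))))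
          + a ⊗ₜ[ℂ] (x ^ i * g ^ l) := by
        rw [hcan, hδmono i l, map_sum]
        have hterm : ∀ k ∈ Finset.range (i + 1),
            (LinearMap.rTensor T (LinearMap.mulLeft ℂ b))
              (TaftAux14.cc q i k • ((X ^ k * G ^ l) ⊗ₜ[ℂ] (x ^ (i - k) * g ^ (k + l))))
            = TaftAux14.cc q i k • ((b * (X ^ k * G ^ l)) ⊗ₜ[ℂ] (x ^ (i - k) * g ^ (k + l))) := by
          intro k _
          rw [map_smul, LinearMap.rTensor_tmul, LinearMap.mulLeft_apply]
        rw [Finset.sum_congr rfl hterm,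
          Finset.sum_range_succ' (fun k => TaftAux14.cc q i k •
            ((b * (X ^ k * G ^ l)) ⊗ₜ[ℂ] (x ^ (i - k) * g ^ (k + l)))) i]
        congr 1
        rw [TaftAux14.cc_zero_right, pow_zero, one_mul, Nat.sub_zero, Nat.zero_add, hbG,
          one_smul]
      have hmem : a ⊗ₜ[ℂ] (x ^ i * g ^ l) = canMapPt δ (b ⊗ₜ[ℂ] (X ^ i * G ^ l)) -
          ∑ k ∈ Finset.range i, TaftAux14.cc q i (k + 1) •
            ((b * (X ^ (k + 1) * G ^ l)) ⊗ₜ[ℂ] (x ^ (i - (k + 1)) * g ^ (k + 1 + l))) := by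
        rw [hkey]; abel
      rw [hmem]
      refine sub_mem (LinearMap.mem_range_self _ _)
        (Submodule.sum_mem _ fun k hk => Submodule.smul_mem _ _ ?_)
      exact IH (i - (k + 1)) (by have := Finset.mem_range.mp hk; omega) _ _
  -- surjectivity
  have hsurj : Function.Surjective (canMapPt δ) := by
    rw [← LinearMap.range_eq_top, ← top_le_iff, ← (BA.tensorProduct BT).span_eq,
      Submodule.span_le]
    rintro _ ⟨p, rfl⟩
    rw [Module.Basis.tensorProduct_apply', hBA, hBT]
    exact memR _ _ _
  -- injectivity from equal finite dimensions
  haveI : Module.Finite ℂ A := Module.Finite.of_basis BA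
  haveI : Module.Finite ℂ T := Module.Finite.of_basis BT
  have hrank : Module.finrank ℂ (A ⊗[ℂ] A) = Module.finrank ℂ (A ⊗[ℂ] T) := by
    rw [Module.finrank_tensorProduct, Module.finrank_tensorProduct,
      Module.finrank_eq_card_basis BA, Module.finrank_eq_card_basis BT]
  have hinj : Function.Injective (canMapPt δ) :=
    (LinearMap.injective_iff_surjective_of_finrank_eq_finrank hrank).mpr hsurj
  haveI : NeZero N := ⟨by omega⟩
  have hone : (1 : A) = BA (0, 0) := by
    rw [hBA]
    simp
  refine ⟨part1, part2, ?_, hinj, hsurj⟩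
  ext a
  simp only [Set.mem_setOf_eq, Set.mem_range]
  constructor
  · intro ha
    have h1 : canMapPt δ ((1 : A) ⊗ₜ[ℂ] a) = a ⊗ₜ[ℂ] (1 : T) := by
      rw [hcan, ha, LinearMap.rTensor_tmul, LinearMap.mulLeft_apply, one_mul]
    have h2 : canMapPt δ (a ⊗ₜ[ℂ] (1 : A)) = a ⊗ₜ[ℂ] (1 : T) := by
      rw [hcan, map_one, Algebra.TensorProduct.one_def, LinearMap.rTensor_tmul,
        LinearMap.mulLeft_apply, mul_one]
    have h3 : (1 : A) ⊗ₜ[ℂ] a = a ⊗ₜ[ℂ] (1 : A) := hinj (h1.trans h2.symm)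
    have hcoordeq : ∀ p : Fin N × Fin N,
        BA.repr (1 : A) p • a = BA.repr a p • (1 : A) := by
      intro p
      have := congrArg ((TensorProduct.lid ℂ A).toLinearMap ∘ₗ
        (TensorProduct.map (BA.coord p) LinearMap.id)) h3
      simpa [Module.Basis.coord_apply] using this
    have hrepr1 : ∀ p : Fin N × Fin N, BA.repr (1 : A) p = if p = (0, 0) then 1 else 0 := by
      intro p
      rw [hone, BA.repr_self, Finsupp.single_apply]
      simp [eq_comm]
    have hvanish : ∀ p : Fin N × Fin N, p ≠ (0, 0) → BA.repr a p = 0 := by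
      intro p hp
      have h4 := hcoordeq p
      rw [hrepr1 p, if_neg hp, zero_smul] at h4
      have h5 := congrArg (fun z => BA.repr z (0, 0)) h4.symm
      simpa [hone, map_smul, BA.repr_self, Finsupp.single_apply] using h5
    refine ⟨BA.repr a (0, 0), ?_⟩
    rw [Algebra.algebraMap_eq_smul_one]
    conv_rhs => rw [← BA.sum_repr a]
    rw [Fintype.sum_eq_single ((0, 0) : Fin N × Fin N)
      (fun p hp => by rw [hvanish p hp, zero_smul]), ← hone]
  · rintro ⟨c, rfl⟩
    rw [AlgHom.commutes, Algebra.TensorProduct.algebraMap_apply,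
      Algebra.algebraMap_eq_smul_one]


end
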